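/- arXiv:1812.01403 — 3 statements merged into one kernel-verified Lean document; each statement's English description precedes it below -/
import Mathlib

section
/- Decomposition of the area anomaly: let (X_n)_{n≥0} be a discrete-time process on ℝ^d on a probability space (Ω, F, P) with |X_{n+1} − X_n| ≤ K P-a.s., let τ_1 < τ_2 be F-measurable, P-a.s. finite, integer-valued random times with E[(τ_2 − τ_1)²] < ∞, let v ∈ ℝ^d, and set X̄_n = X_n − n·v and Γ = E[A_{τ_1,τ_2}(X̄)] / E[τ_2 − τ_1]. Then Γ = E[A_{τ_1,τ_2}(X)] / E[τ_2 − τ_1] + E[Σ_{τ_1 < k < ℓ ≤ τ_2} ((v ⊗ ΔX_k + ΔX_ℓ ⊗ v) − (ΔX_k ⊗ v + v ⊗ ΔX_ℓ))] / (2 E[τ_2 − τ_1]), where ΔX_k = X_k − X_{k−1}; in particular all expectations above are finite and E[τ_2 − τ_1] > 0. -/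
open Matrix Finset

/-- `tens a b` is the `d × d` matrix `(a i * b j)_{i,j}`, i.e. the tensor product `a ⊗ b`. -/
noncomputable def tens {d : ℕ} (a b : Fin d → ℝ) : Matrix (Fin d) (Fin d) ℝ :=
  Matrix.of fun i j => a i * b j

/-- The increment `Δx_k = x_k − x_{k−1}` of a sequence `x : ℕ → ℝ^d`. -/
noncomputable def inc {d : ℕ} (x : ℕ → Fin d → ℝ) (k : ℕ) : Fin d → ℝ :=
  x k - x (k - 1)

/-- The discrete second-level iterated integral
`S_{m,n}(x) = Σ_{m+1 ≤ k < ℓ ≤ n} Δx_k ⊗ Δx_ℓ + (1/2) Σ_{m+1 ≤ k ≤ n} Δx_k ⊗ Δx_k`. -/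
noncomputable def iint {d : ℕ} (x : ℕ → Fin d → ℝ) (m n : ℕ) : Matrix (Fin d) (Fin d) ℝ :=
  (∑ k ∈ Finset.Icc (m + 1) n, ∑ l ∈ Finset.Icc (k + 1) n, tens (inc x k) (inc x l)) +
    (1 / 2 : ℝ) • ∑ k ∈ Finset.Icc (m + 1) n, tens (inc x k) (inc x k)

/-- The discrete signed area `A_{m,n}(x) = (1/2)(S_{m,n}(x) − S_{m,n}(x)ᵀ)`. -/
noncomputable def sarea {d : ℕ} (x : ℕ → Fin d → ℝ) (m n : ℕ) : Matrix (Fin d) (Fin d) ℝ :=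
  (1 / 2 : ℝ) • (iint x m n - (iint x m n)ᵀ)

open MeasureTheory

/-- Entrywise expectation of a matrix-valued random variable. -/
noncomputable def matExp {Ω : Type*} [MeasurableSpace Ω] (P : Measure Ω) {d : ℕ}
    (M : Ω → Matrix (Fin d) (Fin d) ℝ) : Matrix (Fin d) (Fin d) ℝ :=
  Matrix.of fun i j => ∫ ω, M ω i j ∂P

/-- The drift cross-term
`Σ_{m < k < ℓ ≤ n} ((v ⊗ Δx_k + Δx_ℓ ⊗ v) − (Δx_k ⊗ v + v ⊗ Δx_ℓ))`. -/
noncomputable def driftSum {d : ℕ} (x : ℕ → Fin d → ℝ) (v : Fin d → ℝ) (m n : ℕ) :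
    Matrix (Fin d) (Fin d) ℝ :=
  ∑ k ∈ Finset.Icc (m + 1) n, ∑ l ∈ Finset.Icc (k + 1) n,
    ((tens v (inc x k) + tens (inc x l) v) - (tens (inc x k) v + tens v (inc x l)))



lemma sarea_apply {d : ℕ} (x : ℕ → Fin d → ℝ) (m n : ℕ) (i j : Fin d) :
    sarea x m n i j = (1/2 : ℝ) * ∑ k ∈ Icc (m+1) n, ∑ l ∈ Icc (k+1) n,
      (inc x k i * inc x l j - inc x k j * inc x l i) := by
  have hdiag : ∑ k ∈ Icc (m+1) n, (inc x k j * inc x k i)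
      = ∑ k ∈ Icc (m+1) n, (inc x k i * inc x k j) :=
    Finset.sum_congr rfl fun k _ => mul_comm _ _
  simp only [sarea, iint, tens, Matrix.smul_apply, Matrix.sub_apply, Matrix.add_apply,
    Matrix.transpose_apply, Matrix.sum_apply, Matrix.of_apply, smul_eq_mul,
    Finset.sum_sub_distrib, hdiag]
  ring

lemma driftSum_apply {d : ℕ} (x : ℕ → Fin d → ℝ) (v : Fin d → ℝ) (m n : ℕ) (i j : Fin d) :
    driftSum x v m n i j = ∑ k ∈ Icc (m+1) n, ∑ l ∈ Icc (k+1) n,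
      (v i * inc x k j + inc x l i * v j - (inc x k i * v j + v i * inc x l j)) := by
  simp [driftSum, tens, Matrix.sum_apply]

lemma inc_shift {d : ℕ} (x : ℕ → Fin d → ℝ) (v : Fin d → ℝ) {k : ℕ} (hk : 1 ≤ k) (i : Fin d) :
    inc (fun n => x n - (n : ℝ) • v) k i = inc x k i - v i := by
  have : ((k - 1 : ℕ) : ℝ) = (k : ℝ) - 1 := by
    rw [Nat.cast_sub hk]; norm_num
  simp [inc, this, Pi.sub_apply, Pi.smul_apply, smul_eq_mul]
  ring

lemma sarea_shift {d : ℕ} (x : ℕ → Fin d → ℝ) (v : Fin d → ℝ) (m n : ℕ) (i j : Fin d) :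
    sarea (fun k => x k - (k : ℝ) • v) m n i j
      = sarea x m n i j + (1/2 : ℝ) * driftSum x v m n i j := by
  rw [sarea_apply, sarea_apply, driftSum_apply, ← mul_add, ← Finset.sum_add_distrib]
  congr 1
  refine Finset.sum_congr rfl fun k hk => ?_
  rw [← Finset.sum_add_distrib]
  refine Finset.sum_congr rfl fun l hl => ?_
  have hk1 : 1 ≤ k := by have := (mem_Icc.mp hk).1; omega
  have hl1 : 1 ≤ l := by have := (mem_Icc.mp hl).1; omega
  rw [inc_shift x v hk1 i, inc_shift x v hk1 j, inc_shift x v hl1 i, inc_shift x v hl1 j]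
  ring

lemma abs_ddsum_le (f : ℕ → ℕ → ℝ) (m n : ℕ) (D : ℝ) (hD : 0 ≤ D) (hmn : m ≤ n)
    (hf : ∀ k ∈ Icc (m+1) n, ∀ l ∈ Icc (k+1) n, |f k l| ≤ D) :
    |∑ k ∈ Icc (m+1) n, ∑ l ∈ Icc (k+1) n, f k l| ≤ ((n:ℝ) - (m:ℝ))^2 * D := by
  have hcard : (((Icc (m+1) n).card : ℕ) : ℝ) = (n:ℝ) - m := by
    rw [Nat.card_Icc, show n + 1 - (m+1) = n - m by omega, Nat.cast_sub hmn]
  have step : ∀ k ∈ Icc (m+1) n,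
      |∑ l ∈ Icc (k+1) n, f k l| ≤ ((n:ℝ) - m) * D := by
    intro k hk
    refine le_trans (Finset.abs_sum_le_sum_abs _ _)
      (le_trans (Finset.sum_le_card_nsmul _ _ D (hf k hk)) ?_)
    rw [nsmul_eq_mul, ← hcard]
    have hcle : (Icc (k+1) n).card ≤ (Icc (m+1) n).card :=
      Finset.card_le_card (Finset.Icc_subset_Icc (by have := (mem_Icc.mp hk).1; omega) le_rfl)
    have : ((Icc (k+1) n).card : ℝ) ≤ ((Icc (m+1) n).card : ℝ) := by exact_mod_cast hcle
    exact mul_le_mul_of_nonneg_right this hD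
  refine le_trans (Finset.abs_sum_le_sum_abs _ _)
    (le_trans (Finset.sum_le_card_nsmul _ _ _ step) ?_)
  rw [nsmul_eq_mul, hcard]
  exact le_of_eq (by ring)

lemma abs_sarea_le {d : ℕ} (x : ℕ → Fin d → ℝ) (m n : ℕ) (i j : Fin d) (B : ℝ)
    (hB0 : 0 ≤ B) (hmn : m ≤ n)
    (h : ∀ k ∈ Icc (m+1) n, |inc x k i| ≤ B ∧ |inc x k j| ≤ B) :
    |sarea x m n i j| ≤ ((n:ℝ) - m)^2 * B^2 := by
  rw [sarea_apply, abs_mul]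
  have key := abs_ddsum_le (fun k l => inc x k i * inc x l j - inc x k j * inc x l i)
    m n (2*B^2) (by positivity) hmn ?_
  · rw [abs_of_nonneg (by norm_num : (0:ℝ) ≤ (1:ℝ)/2)]
    have h2 : ((n:ℝ)-m)^2*(2*B^2) = 2*(((n:ℝ)-m)^2*B^2) := by ring
    rw [h2] at key
    linarith
  · intro k hk l hl
    obtain ⟨h1, h2⟩ := h k hk
    have hlmem : l ∈ Icc (m+1) n := by
      simp only [mem_Icc] at hk hl ⊢; omega
    obtain ⟨h3, h4⟩ := h l hlmem
    calc |inc x k i * inc x l j - inc x k j * inc x l i|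
        ≤ |inc x k i * inc x l j| + |inc x k j * inc x l i| := abs_sub _ _
      _ = |inc x k i| * |inc x l j| + |inc x k j| * |inc x l i| := by rw [abs_mul, abs_mul]
      _ ≤ B * B + B * B := add_le_add
          (mul_le_mul h1 h4 (abs_nonneg _) hB0) (mul_le_mul h2 h3 (abs_nonneg _) hB0)
      _ = 2*B^2 := by ring

lemma abs_driftSum_le {d : ℕ} (x : ℕ → Fin d → ℝ) (v : Fin d → ℝ) (m n : ℕ) (i j : Fin d)
    (B : ℝ) (hB0 : 0 ≤ B) (hmn : m ≤ n)
    (h : ∀ k ∈ Icc (m+1) n, |inc x k i| ≤ B ∧ |inc x k j| ≤ B) :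
    |driftSum x v m n i j| ≤ ((n:ℝ) - m)^2 * (2 * B * (|v i| + |v j|)) := by
  rw [driftSum_apply]
  refine abs_ddsum_le _ m n _ (by positivity) hmn ?_
  intro k hk l hl
  obtain ⟨h1, h2⟩ := h k hk
  have hlmem : l ∈ Icc (m+1) n := by
    simp only [mem_Icc] at hk hl ⊢; omega
  obtain ⟨h3, h4⟩ := h l hlmem
  have e1 : |v i * inc x k j + inc x l i * v j - (inc x k i * v j + v i * inc x l j)|
      ≤ |v i * inc x k j| + |inc x l i * v j| + (|inc x k i * v j| + |v i * inc x l j|) :=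
    le_trans (abs_sub _ _) (by
      refine add_le_add (le_trans (abs_add_le _ _) le_rfl) (le_trans (abs_add_le _ _) le_rfl))
  refine le_trans e1 ?_
  rw [abs_mul, abs_mul, abs_mul, abs_mul]
  have b1 : |v i| * |inc x k j| ≤ |v i| * B := mul_le_mul_of_nonneg_left h2 (abs_nonneg _)
  have b2 : |inc x l i| * |v j| ≤ B * |v j| := mul_le_mul_of_nonneg_right h3 (abs_nonneg _)
  have b3 : |inc x k i| * |v j| ≤ B * |v j| := mul_le_mul_of_nonneg_right h1 (abs_nonneg _)
  have b4 : |v i| * |inc x l j| ≤ |v i| * B := mul_le_mul_of_nonneg_left h4 (abs_nonneg _)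
  nlinarith [b1, b2, b3, b4]

lemma meas_comp_times {Ω : Type*} [MeasurableSpace Ω] {τ₁ τ₂ : Ω → ℕ}
    (hτ₁ : Measurable τ₁) (hτ₂ : Measurable τ₂)
    (F : ℕ → ℕ → Ω → ℝ) (hF : ∀ m n, Measurable (F m n)) :
    Measurable fun ω => F (τ₁ ω) (τ₂ ω) ω := by
  have h1 : Measurable fun p : Ω × (ℕ × ℕ) => F p.2.1 p.2.2 p.1 :=
    measurable_from_prod_countable_left fun y => hF y.1 y.2
  exact h1.comp (measurable_id.prodMk (hτ₁.prodMk hτ₂))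

/-- Decomposition of the area anomaly: if `(X_n)` has jumps bounded by `K` a.s. and
`τ_1 < τ_2` are a.s. finite integer random times with `E[(τ_2 − τ_1)²] < ∞`, then with
`X̄_n = X_n − n·v` and `Γ = E[A_{τ_1,τ_2}(X̄)] / E[τ_2 − τ_1]` one has
`Γ = E[A_{τ_1,τ_2}(X)] / E[τ_2 − τ_1]
   + E[Σ_{τ_1 < k < ℓ ≤ τ_2} ((v ⊗ ΔX_k + ΔX_ℓ ⊗ v) − (ΔX_k ⊗ v + v ⊗ ΔX_ℓ))] / (2 E[τ_2 − τ_1])`,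
with all the expectations finite and `E[τ_2 − τ_1] > 0`. -/
theorem area_anomaly_decomposition {d : ℕ} {Ω : Type*} [MeasurableSpace Ω]
    (P : Measure Ω) [IsProbabilityMeasure P]
    (X : ℕ → Ω → Fin d → ℝ) (hXmeas : ∀ n, Measurable (X n))
    (K : ℝ)
    (hbdd : ∀ᵐ ω ∂P, ∀ n, Real.sqrt (∑ i, (X (n + 1) ω i - X n ω i) ^ 2) ≤ K)
    (τ₁ τ₂ : Ω → ℕ) (hτ₁ : Measurable τ₁) (hτ₂ : Measurable τ₂)
    (hlt : ∀ᵐ ω ∂P, τ₁ ω < τ₂ ω)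
    (hmom : Integrable (fun ω => ((τ₂ ω : ℝ) - (τ₁ ω : ℝ)) ^ 2) P)
    (v : Fin d → ℝ) :
    0 < ∫ ω, ((τ₂ ω : ℝ) - (τ₁ ω : ℝ)) ∂P ∧
    (∀ i j, Integrable
      (fun ω => sarea (fun n => X n ω - (n : ℝ) • v) (τ₁ ω) (τ₂ ω) i j) P) ∧
    (∀ i j, Integrable (fun ω => sarea (fun n => X n ω) (τ₁ ω) (τ₂ ω) i j) P) ∧
    (∀ i j, Integrable (fun ω => driftSum (fun n => X n ω) v (τ₁ ω) (τ₂ ω) i j) P) ∧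
    (∫ ω, ((τ₂ ω : ℝ) - (τ₁ ω : ℝ)) ∂P)⁻¹ •
        matExp P (fun ω => sarea (fun n => X n ω - (n : ℝ) • v) (τ₁ ω) (τ₂ ω)) =
      (∫ ω, ((τ₂ ω : ℝ) - (τ₁ ω : ℝ)) ∂P)⁻¹ •
          matExp P (fun ω => sarea (fun n => X n ω) (τ₁ ω) (τ₂ ω)) +
        (2 * ∫ ω, ((τ₂ ω : ℝ) - (τ₁ ω : ℝ)) ∂P)⁻¹ •
          matExp P (fun ω => driftSum (fun n => X n ω) v (τ₁ ω) (τ₂ ω)) := by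
  -- coordinate measurability
  have hXi : ∀ k (i : Fin d), Measurable fun ω => X k ω i :=
    fun k i => (measurable_pi_apply i).comp (hXmeas k)
  have hIncMeas : ∀ k (i : Fin d), Measurable fun ω => inc (fun n => X n ω) k i := by
    intro k i
    simp only [inc, Pi.sub_apply]
    exact (hXi k i).sub (hXi (k-1) i)
  have hIncMeas' : ∀ k (i : Fin d),
      Measurable fun ω => inc (fun n => X n ω - (n : ℝ) • v) k i := by
    intro k i
    simp only [inc, Pi.sub_apply, Pi.smul_apply, smul_eq_mul]
    exact ((hXi k i).sub measurable_const).sub ((hXi (k-1) i).sub measurable_const)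
  -- a.e. bound, with nonnegative constant B
  set B : ℝ := max K 0 with hBdef
  have hB0 : 0 ≤ B := le_max_right _ _
  have hincX : ∀ᵐ ω ∂P, ∀ k, 1 ≤ k → ∀ i, |inc (fun n => X n ω) k i| ≤ B := by
    filter_upwards [hbdd] with ω hω k hk i
    have h1 : inc (fun n => X n ω) k i = X ((k-1)+1) ω i - X (k-1) ω i := by
      simp only [inc, Pi.sub_apply]
      rw [show k - 1 + 1 = k by omega]
    rw [h1]
    have h3 : |X ((k-1)+1) ω i - X (k-1) ω i|
        ≤ Real.sqrt (∑ i', (X ((k-1)+1) ω i' - X (k-1) ω i')^2) := by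
      rw [← Real.sqrt_sq_eq_abs]
      exact Real.sqrt_le_sqrt (Finset.single_le_sum
        (f := fun i' => (X (k-1+1) ω i' - X (k-1) ω i')^2)
        (fun i' _ => sq_nonneg _) (Finset.mem_univ i))
    exact h3.trans ((hω (k-1)).trans (le_max_left _ _))
  -- integrability of τ₂ - τ₁
  have hτdiffmeas : Measurable fun ω => (τ₂ ω : ℝ) - (τ₁ ω : ℝ) :=
    (measurable_from_top.comp hτ₂).sub (measurable_from_top.comp hτ₁)
  have hτdiffint : Integrable (fun ω => (τ₂ ω : ℝ) - (τ₁ ω : ℝ)) P := by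
    refine Integrable.mono' ((integrable_const (1:ℝ)).add hmom)
      hτdiffmeas.aestronglyMeasurable ?_
    filter_upwards with ω
    rw [Real.norm_eq_abs]
    simp only [Pi.add_apply]
    nlinarith [sq_nonneg (|((τ₂ ω:ℝ) - τ₁ ω)| - 1), abs_nonneg ((τ₂ ω:ℝ) - τ₁ ω),
      sq_abs ((τ₂ ω:ℝ) - τ₁ ω)]
  -- positivity of the mean gap
  have hc : 0 < ∫ ω, ((τ₂ ω : ℝ) - (τ₁ ω : ℝ)) ∂P := by
    have hle : (fun _ : Ω => (1:ℝ)) ≤ᶠ[ae P] fun ω => (τ₂ ω : ℝ) - τ₁ ω := by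
      filter_upwards [hlt] with ω h
      have : ((τ₁ ω + 1 : ℕ) : ℝ) ≤ (τ₂ ω : ℝ) := Nat.cast_le.mpr h
      push_cast at this; linarith
    have h := integral_mono_ae (integrable_const (1:ℝ)) hτdiffint hle
    simp only [integral_const, measure_univ, ENNReal.toReal_one, probReal_univ, smul_eq_mul, one_mul] at h
    linarith
  -- generic integrability helper
  have hgen : ∀ (F : ℕ → ℕ → Ω → ℝ), (∀ m n, Measurable (F m n)) → ∀ (C : ℝ),
      (∀ᵐ ω ∂P, τ₁ ω < τ₂ ω → |F (τ₁ ω) (τ₂ ω) ω| ≤ ((τ₂ ω:ℝ) - τ₁ ω)^2 * C) →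
      Integrable (fun ω => F (τ₁ ω) (τ₂ ω) ω) P := by
    intro F hFmeas C hFb
    refine Integrable.mono' (hmom.mul_const C)
      (meas_comp_times hτ₁ hτ₂ F hFmeas).aestronglyMeasurable ?_
    filter_upwards [hlt, hFb] with ω h1 h2
    rw [Real.norm_eq_abs]
    exact h2 h1
  -- three integrabilities
  have hIntX : ∀ i j, Integrable
      (fun ω => sarea (fun n => X n ω) (τ₁ ω) (τ₂ ω) i j) P := by
    intro i j
    refine hgen (fun m n ω => sarea (fun k => X k ω) m n i j) ?_ (B^2) ?_
    · intro m n
      simp only [sarea_apply]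
      exact (Finset.measurable_sum _ (fun k _ => Finset.measurable_sum _ (fun l _ =>
        ((hIncMeas k i).mul (hIncMeas l j)).sub
          ((hIncMeas k j).mul (hIncMeas l i))))).const_mul _
    · filter_upwards [hincX] with ω hω hτ
      refine abs_sarea_le _ _ _ i j B hB0 hτ.le fun k hk => ?_
      have hk1 : 1 ≤ k := by have := (mem_Icc.mp hk).1; omega
      exact ⟨hω k hk1 i, hω k hk1 j⟩
  have hIntBar : ∀ i j, Integrable
      (fun ω => sarea (fun n => X n ω - (n : ℝ) • v) (τ₁ ω) (τ₂ ω) i j) P := by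
    intro i j
    refine hgen (fun m n ω => sarea (fun k => X k ω - (k : ℝ) • v) m n i j) ?_
      ((B + |v i| + |v j|)^2) ?_
    · intro m n
      simp only [sarea_apply]
      exact (Finset.measurable_sum _ (fun k _ => Finset.measurable_sum _ (fun l _ =>
        ((hIncMeas' k i).mul (hIncMeas' l j)).sub
          ((hIncMeas' k j).mul (hIncMeas' l i))))).const_mul _
    · filter_upwards [hincX] with ω hω hτ
      refine abs_sarea_le _ _ _ i j (B + |v i| + |v j|) (by positivity) hτ.le fun k hk => ?_
      have hk1 : 1 ≤ k := by have := (mem_Icc.mp hk).1; omega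
      constructor
      · rw [inc_shift _ v hk1 i]
        have := hω k hk1 i
        have h2 := abs_sub (inc (fun n => X n ω) k i) (v i)
        have h3 : (0:ℝ) ≤ |v j| := abs_nonneg _
        linarith
      · rw [inc_shift _ v hk1 j]
        have := hω k hk1 j
        have h2 := abs_sub (inc (fun n => X n ω) k j) (v j)
        have h3 : (0:ℝ) ≤ |v i| := abs_nonneg _
        linarith
  have hIntD : ∀ i j, Integrable
      (fun ω => driftSum (fun n => X n ω) v (τ₁ ω) (τ₂ ω) i j) P := by
    intro i j
    refine hgen (fun m n ω => driftSum (fun k => X k ω) v m n i j) ?_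
      (2 * B * (|v i| + |v j|)) ?_
    · intro m n
      simp only [driftSum_apply]
      exact Finset.measurable_sum _ (fun k _ => Finset.measurable_sum _ (fun l _ =>
        ((((hIncMeas k j).const_mul _).add ((hIncMeas l i).mul_const _)).sub
          (((hIncMeas k i).mul_const _).add ((hIncMeas l j).const_mul _)))))
    · filter_upwards [hincX] with ω hω hτ
      refine abs_driftSum_le _ v _ _ i j B hB0 hτ.le fun k hk => ?_
      have hk1 : 1 ≤ k := by have := (mem_Icc.mp hk).1; omega
      exact ⟨hω k hk1 i, hω k hk1 j⟩
  refine ⟨hc, hIntBar, hIntX, hIntD, ?_⟩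
  have hc0 : (∫ ω, ((τ₂ ω : ℝ) - (τ₁ ω : ℝ)) ∂P) ≠ 0 := ne_of_gt hc
  ext i j
  simp only [Matrix.smul_apply, Matrix.add_apply, matExp, Matrix.of_apply, smul_eq_mul]
  have hpt : (fun ω => sarea (fun n => X n ω - (n : ℝ) • v) (τ₁ ω) (τ₂ ω) i j)
      = fun ω => sarea (fun n => X n ω) (τ₁ ω) (τ₂ ω) i j
          + (1/2 : ℝ) * driftSum (fun n => X n ω) v (τ₁ ω) (τ₂ ω) i j := by
    funext ω; exact sarea_shift (fun n => X n ω) v (τ₁ ω) (τ₂ ω) i j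
  rw [hpt, integral_add (hIntX i j) ((hIntD i j).const_mul _), integral_const_mul]
  field_simp
end

section
/- Overshoot moment bound: let (τ_k)_{k≥0} be integer-valued random variables on a probability space (Ω, F, P) with τ_0 = 0 and τ_k < τ_{k+1} P-a.s. for all k, and suppose E[(τ_{k+1} − τ_k)³] ≤ C for all k ≥ 0 and some C > 0. For n ∈ ℕ let κ(n) be the unique k with τ_k ≤ n < τ_{k+1}. Then E[τ_{κ(n)+1} − τ_{κ(n)}] ≤ C^{1/3} (n + 1)^{1/3} for every n ∈ ℕ. -/
open MeasureTheory

/-- Overshoot moment bound: if `(τ_k)` are integer random times with `τ_0 = 0`,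
`τ_k < τ_{k+1}` a.s., `E[(τ_{k+1} − τ_k)³] ≤ C` for all `k`, and `κ(n)` is the unique `k`
with `τ_k ≤ n < τ_{k+1}`, then `E[τ_{κ(n)+1} − τ_{κ(n)}] ≤ C^{1/3} (n + 1)^{1/3}`. -/
theorem overshoot_moment_bound {Ω : Type*} [MeasurableSpace Ω]
    (P : Measure Ω) [IsProbabilityMeasure P]
    (τ : ℕ → Ω → ℕ) (hτmeas : ∀ k, Measurable (τ k))
    (hτ0 : ∀ ω, τ 0 ω = 0)
    (hmono : ∀ᵐ ω ∂P, ∀ k, τ k ω < τ (k + 1) ω)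
    (C : ℝ) (hC : 0 < C)
    (hint : ∀ k, Integrable (fun ω => ((τ (k + 1) ω : ℝ) - (τ k ω : ℝ)) ^ 3) P)
    (hmom : ∀ k, ∫ ω, ((τ (k + 1) ω : ℝ) - (τ k ω : ℝ)) ^ 3 ∂P ≤ C)
    (κ : ℕ → Ω → ℕ) (hκmeas : ∀ n, Measurable (κ n))
    (hκ : ∀ᵐ ω ∂P, ∀ n, τ (κ n ω) ω ≤ n ∧ n < τ (κ n ω + 1) ω) :
    ∀ n : ℕ, ∫ ω, ((τ (κ n ω + 1) ω : ℝ) - (τ (κ n ω) ω : ℝ)) ∂P ≤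
      C ^ ((1 : ℝ) / 3) * ((n : ℝ) + 1) ^ ((1 : ℝ) / 3) := by
  intro n
  set F : Ω → ℝ := fun ω => ((τ (κ n ω + 1) ω : ℝ) - (τ (κ n ω) ω : ℝ)) with hF
  -- measurability of F
  have hT : Measurable fun p : Ω × ℕ => (τ p.2 p.1 : ℝ) :=
    measurable_from_prod_countable_left fun k => measurable_from_top.comp (hτmeas k)
  have hm1 : Measurable fun ω => (τ (κ n ω) ω : ℝ) :=
    hT.comp (measurable_id.prodMk (hκmeas n))
  have hm2 : Measurable fun ω => (τ (κ n ω + 1) ω : ℝ) :=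
    hT.comp (measurable_id.prodMk ((hκmeas n).add_const 1))
  have hmF : Measurable F := hm2.sub hm1
  -- a.e. properties
  have hae : ∀ᵐ ω ∂P, (κ n ω ≤ n ∧ 0 ≤ F ω) := by
    filter_upwards [hmono, hκ] with ω hmo hk
    have hsm : StrictMono fun k => τ k ω := strictMono_nat_of_lt_succ hmo
    have hle : κ n ω ≤ τ (κ n ω) ω := hsm.le_apply
    constructor
    · exact le_trans hle (hk n).1
    · have : τ (κ n ω) ω ≤ τ (κ n ω + 1) ω := (hmo (κ n ω)).le
      simp only [hF, sub_nonneg]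
      exact_mod_cast this
  have hFnn : 0 ≤ᵐ[P] F := hae.mono fun ω h => h.2
  -- the indicator decomposition of F^3
  set g : ℕ → Ω → ℝ := fun k ω => ((τ (k + 1) ω : ℝ) - (τ k ω : ℝ)) ^ 3 with hg
  have hset : ∀ k, MeasurableSet {ω | κ n ω = k} := fun k =>
    hκmeas n (measurableSet_singleton k)
  have hdecomp : (fun ω => F ω ^ 3) =ᵐ[P]
      fun ω => ∑ k ∈ Finset.range (n + 1), Set.indicator {ω' | κ n ω' = k} (g k) ω := by
    filter_upwards [hae] with ω h
    have : ∀ k, Set.indicator {ω' | κ n ω' = k} (g k) ω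
        = if κ n ω = k then g k ω else 0 := by
      intro k; simp [Set.indicator_apply, Set.mem_setOf_eq]
    simp only [this]
    rw [Finset.sum_ite_eq (Finset.range (n + 1)) (κ n ω) (fun k => g k ω)]
    rw [if_pos (Finset.mem_range.2 (Nat.lt_succ_of_le h.1))]
  have hint_ind : ∀ k, Integrable (Set.indicator {ω' | κ n ω' = k} (g k)) P := fun k =>
    (hint k).indicator (hset k)
  have hF3int : Integrable (fun ω => F ω ^ 3) P :=
    (integrable_finset_sum _ fun k _ => hint_ind k).congr hdecomp.symm
  -- bound on the third moment
  have hgnn : ∀ k, 0 ≤ᵐ[P] g k := by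
    intro k
    filter_upwards [hmono] with ω hmo
    have : (τ k ω : ℝ) ≤ (τ (k + 1) ω : ℝ) := by exact_mod_cast (hmo k).le
    exact pow_nonneg (by linarith) 3
  have hmom3 : ∫ ω, F ω ^ 3 ∂P ≤ ((n : ℝ) + 1) * C := by
    rw [integral_congr_ae hdecomp]
    rw [integral_finset_sum _ fun k _ => hint_ind k]
    have hterm : ∀ k ∈ Finset.range (n + 1),
        ∫ ω, Set.indicator {ω' | κ n ω' = k} (g k) ω ∂P ≤ C := by
      intro k _
      refine le_trans (integral_mono_ae (hint_ind k) (hint k) ?_) (hmom k)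
      filter_upwards [hgnn k] with ω hω
      exact Set.indicator_le_self' (fun _ _ => hω) ω
    calc ∑ k ∈ Finset.range (n + 1), ∫ ω, Set.indicator {ω' | κ n ω' = k} (g k) ω ∂P
        ≤ ∑ _k ∈ Finset.range (n + 1), C := Finset.sum_le_sum hterm
      _ = ((n : ℝ) + 1) * C := by rw [Finset.sum_const, Finset.card_range, nsmul_eq_mul]; push_cast; ring
  -- Hölder's inequality : ∫ F ≤ (∫ F^3)^{1/3}
  have hpq : Real.HolderConjugate 3 (3 / 2) := ⟨by norm_num, by norm_num, by norm_num⟩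
  have hFmem : MemLp F (ENNReal.ofReal 3) P := by
    rw [show ENNReal.ofReal 3 = (3 : ENNReal) from by rw [ENNReal.ofReal_ofNat]]
    refine (memLp_norm_rpow_iff (q := 3) (p := (3 : ENNReal))
      hmF.aestronglyMeasurable (by norm_num) (by norm_num)).1 ?_
    rw [show (3 : ENNReal) / 3 = 1 from ENNReal.div_self (by norm_num) (by norm_num),
      memLp_one_iff_integrable]
    refine hF3int.congr ?_
    filter_upwards [hFnn] with ω hω
    rw [Real.norm_of_nonneg hω, show ((3 : ENNReal)).toReal = ((3 : ℕ) : ℝ) by simp,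
      Real.rpow_natCast]
  have h1mem : MemLp (fun _ : Ω => (1 : ℝ)) (ENNReal.ofReal (3 / 2)) P := memLp_const 1
  have hholder := integral_mul_le_Lp_mul_Lq_of_nonneg (μ := P) hpq hFnn
    (Filter.Eventually.of_forall fun _ => zero_le_one) hFmem h1mem
  have h1int : (∫ _ω, (1 : ℝ) ^ (3 / 2 : ℝ) ∂P) = 1 := by
    simp
  have hF3eq : (∫ ω, F ω ^ (3 : ℝ) ∂P) = ∫ ω, F ω ^ 3 ∂P := by
    refine integral_congr_ae (Filter.Eventually.of_forall fun ω => ?_)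
    show F ω ^ (3 : ℝ) = F ω ^ 3
    rw [show (3 : ℝ) = ((3 : ℕ) : ℝ) by norm_num]
    exact Real.rpow_natCast (F ω) 3
  have key : ∫ ω, F ω ∂P ≤ (∫ ω, F ω ^ 3 ∂P) ^ ((1 : ℝ) / 3) := by
    have : ∫ ω, F ω ∂P = ∫ ω, F ω * 1 ∂P := by simp
    rw [this]
    calc ∫ ω, F ω * 1 ∂P
        ≤ (∫ ω, F ω ^ (3 : ℝ) ∂P) ^ ((1 : ℝ) / 3)
          * (∫ _ω, (1 : ℝ) ^ (3 / 2 : ℝ) ∂P) ^ (1 / (3 / 2) : ℝ) := hholder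
      _ = (∫ ω, F ω ^ 3 ∂P) ^ ((1 : ℝ) / 3) := by
          rw [h1int, hF3eq, Real.one_rpow, mul_one]
  -- conclude
  have hF3nn : 0 ≤ ∫ ω, F ω ^ 3 ∂P :=
    integral_nonneg_of_ae (hFnn.mono fun ω h => pow_nonneg h 3)
  calc ∫ ω, F ω ∂P ≤ (∫ ω, F ω ^ 3 ∂P) ^ ((1 : ℝ) / 3) := key
    _ ≤ (((n : ℝ) + 1) * C) ^ ((1 : ℝ) / 3) :=
        Real.rpow_le_rpow hF3nn hmom3 (by norm_num)
    _ = C ^ ((1 : ℝ) / 3) * ((n : ℝ) + 1) ^ ((1 : ℝ) / 3) := by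
        rw [mul_comm ((n : ℝ) + 1) C,
          Real.mul_rpow hC.le (by positivity)]
end

section
/- Speed formula: let (X_n)_{n≥0} be a discrete-time process on ℝ^d admitting a regeneration structure with regeneration times (τ_k)_{k≥0}, with |X_{n+1} − X_n| ≤ K P-a.s. for some constant K, and with E[τ_2 − τ_1] < ∞. If X_n / n → v P-a.s. for some v ∈ ℝ^d, then v = E[X_{τ_2} − X_{τ_1}] / E[τ_2 − τ_1]. -/
open Matrix Finset MeasureTheory ProbabilityTheory

/-- The `k`-th regeneration block of the process `X` with respect to the random times `τ`:
the pair consisting of the length `τ_k − τ_{k−1}` and the increments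
`(X_{τ_{k−1}+m} − X_{τ_{k−1}})_{0 ≤ m ≤ τ_k − τ_{k−1}}` (the path is stopped at the end of
the block, so that the pair carries exactly the information of the block). -/
noncomputable def block {Ω : Type*} {d : ℕ} (X : ℕ → Ω → Fin d → ℝ) (τ : ℕ → Ω → ℕ)
    (k : ℕ) (ω : Ω) : ℕ × (ℕ → Fin d → ℝ) :=
  (τ k ω - τ (k - 1) ω,
    fun m => X (τ (k - 1) ω + min m (τ k ω - τ (k - 1) ω)) ω - X (τ (k - 1) ω) ω)

/-- A discrete-time process `(X_n)` on `ℝ^d` admits a regeneration structure with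
regeneration times `(τ_k)` if `0 = τ_0 < τ_1 < τ_2 < ... < ∞` a.s. and the blocks
`(τ_k − τ_{k−1}, (X_{τ_{k−1}+m} − X_{τ_{k−1}})_{0 ≤ m ≤ τ_k − τ_{k−1}})`, `k ≥ 1`, are
independent, and identically distributed for `k ≥ 2`. -/
structure IsRegenerationStructure {Ω : Type*} [MeasurableSpace Ω] (P : Measure Ω) {d : ℕ}
    (X : ℕ → Ω → Fin d → ℝ) (τ : ℕ → Ω → ℕ) : Prop where
  measX : ∀ n, Measurable (X n)
  measτ : ∀ k, Measurable (τ k)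
  zero : ∀ᵐ ω ∂P, τ 0 ω = 0
  mono : ∀ᵐ ω ∂P, ∀ k, τ k ω < τ (k + 1) ω
  indep : iIndepFun (fun k => block X τ (k + 1)) P
  ident : ∀ k, 2 ≤ k → IdentDistrib (block X τ k) (block X τ 2) P P

section helpers

variable {Ω : Type*} {d : ℕ}

lemma measurable_comp_rand {α : Type*} [MeasurableSpace Ω] [MeasurableSpace α] (X : ℕ → Ω → α)
    (hX : ∀ n, Measurable (X n)) {N : Ω → ℕ} (hN : Measurable N) :
    Measurable (fun ω => X (N ω) ω) := by
  have h : Measurable (fun p : Ω × ℕ => X p.2 p.1) :=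
    measurable_from_prod_countable_left (fun n => hX n)
  exact h.comp (measurable_id.prodMk hN)

lemma measurable_block [MeasurableSpace Ω] (X : ℕ → Ω → Fin d → ℝ) (τ : ℕ → Ω → ℕ)
    (hX : ∀ n, Measurable (X n)) (hτ : ∀ k, Measurable (τ k)) (k : ℕ) :
    Measurable (block X τ k) := by
  refine Measurable.prodMk ((hτ k).sub (hτ (k - 1))) ?_
  refine measurable_pi_lambda _ (fun m => ?_)
  have h1 : Measurable fun ω => τ (k - 1) ω + min m (τ k ω - τ (k - 1) ω) :=
    (hτ (k - 1)).add (measurable_const.min ((hτ k).sub (hτ (k - 1))))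
  exact (measurable_comp_rand X hX h1).sub (measurable_comp_rand X hX (hτ (k - 1)))

noncomputable def lenR (d : ℕ) : ℕ × (ℕ → Fin d → ℝ) → ℝ := fun p => (p.1 : ℝ)

def evalEnd {d : ℕ} (i : Fin d) : ℕ × (ℕ → Fin d → ℝ) → ℝ := fun p => p.2 p.1 i

lemma measurable_lenR {d : ℕ} : Measurable (lenR d) :=
  (Measurable.of_discrete (f := fun n : ℕ => (n : ℝ))).comp measurable_fst

lemma measurable_evalEnd {d : ℕ} (i : Fin d) : Measurable (evalEnd (d := d) i) := by
  have h : Measurable (fun q : (ℕ → Fin d → ℝ) × ℕ => q.1 q.2 i) :=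
    measurable_from_prod_countable_left
      (fun n => (measurable_pi_apply i).comp (measurable_pi_apply n))
  exact h.comp measurable_swap

lemma jump_bound (X : ℕ → Ω → Fin d → ℝ) (ω : Ω) (K : ℝ)
    (hb : ∀ n, Real.sqrt (∑ i, (X (n + 1) ω i - X n ω i) ^ 2) ≤ K) (i : Fin d) :
    ∀ (m a : ℕ), |X (a + m) ω i - X a ω i| ≤ K * m := by
  have hstep : ∀ n, |X (n + 1) ω i - X n ω i| ≤ K := by
    intro n
    calc |X (n + 1) ω i - X n ω i|
        = Real.sqrt ((X (n + 1) ω i - X n ω i) ^ 2) := (Real.sqrt_sq_eq_abs _).symm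
      _ ≤ Real.sqrt (∑ j, (X (n + 1) ω j - X n ω j) ^ 2) :=
          Real.sqrt_le_sqrt (Finset.single_le_sum
            (f := fun j => (X (n + 1) ω j - X n ω j) ^ 2)
            (fun j _ => sq_nonneg _) (Finset.mem_univ i))
      _ ≤ K := hb n
  intro m
  induction m with
  | zero => simp
  | succ m ih =>
    intro a
    calc |X (a + (m + 1)) ω i - X a ω i|
        = |(X (a + m + 1) ω i - X (a + m) ω i) + (X (a + m) ω i - X a ω i)| := by
          congr 1; rw [show a + (m + 1) = a + m + 1 from rfl]; ring
      _ ≤ |X (a + m + 1) ω i - X (a + m) ω i| + |X (a + m) ω i - X a ω i| := abs_add_le _ _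
      _ ≤ K + K * m := add_le_add (hstep (a + m)) (ih a)
      _ = K * ((m + 1 : ℕ) : ℝ) := by push_cast; ring

end helpers

/-- Speed formula: if `(X_n)` admits a regeneration structure with regeneration times
`(τ_k)`, has jumps bounded by `K` a.s., `E[τ_2 − τ_1] < ∞`, and `X_n / n → v` a.s., then
`v = E[X_{τ_2} − X_{τ_1}] / E[τ_2 − τ_1]`. -/
theorem speed_formula {Ω : Type*} [MeasurableSpace Ω] (P : Measure Ω)
    [IsProbabilityMeasure P] {d : ℕ} (X : ℕ → Ω → Fin d → ℝ) (τ : ℕ → Ω → ℕ)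
    (hreg : IsRegenerationStructure P X τ)
    (K : ℝ)
    (hbdd : ∀ᵐ ω ∂P, ∀ n, Real.sqrt (∑ i, (X (n + 1) ω i - X n ω i) ^ 2) ≤ K)
    (hint : Integrable (fun ω => ((τ 2 ω : ℝ) - (τ 1 ω : ℝ))) P)
    (v : Fin d → ℝ)
    (hlln : ∀ᵐ ω ∂P, Filter.Tendsto (fun n : ℕ => ((n : ℝ))⁻¹ • X n ω) Filter.atTop (nhds v)) :
    v = (∫ ω, ((τ 2 ω : ℝ) - (τ 1 ω : ℝ)) ∂P)⁻¹ •
      ∫ ω, (X (τ 2 ω) ω - X (τ 1 ω) ω) ∂P := by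
  classical
  set E : ℝ := ∫ ω, ((τ 2 ω : ℝ) - (τ 1 ω : ℝ)) ∂P with hE_def
  set L : Fin d → ℝ := fun i => ∫ ω, (X (τ 2 ω) ω i - X (τ 1 ω) ω i) ∂P with hL_def
  set T : ℕ → Ω → ℝ := fun k => lenR d ∘ block X τ (k + 2) with hT_def
  set Z : Fin d → ℕ → Ω → ℝ := fun i k => evalEnd i ∘ block X τ (k + 2) with hZ_def
  have hblock := measurable_block X τ hreg.measX hreg.measτ
  -- pointwise values on the monotone event
  have hTval : ∀ ω, (∀ k, τ k ω < τ (k + 1) ω) → ∀ k,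
      T k ω = (τ (k + 2) ω : ℝ) - (τ (k + 1) ω : ℝ) := by
    intro ω hm k
    have hle : τ (k + 1) ω ≤ τ (k + 2) ω := (hm (k + 1)).le
    simp only [hT_def, Function.comp_apply, lenR, block]
    rw [show k + 2 - 1 = k + 1 from rfl, Nat.cast_sub hle]
  have hZval : ∀ ω, (∀ k, τ k ω < τ (k + 1) ω) → ∀ (i : Fin d) k,
      Z i k ω = X (τ (k + 2) ω) ω i - X (τ (k + 1) ω) ω i := by
    intro ω hm i k
    have hle : τ (k + 1) ω ≤ τ (k + 2) ω := (hm (k + 1)).le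
    simp only [hZ_def, Function.comp_apply, evalEnd, block]
    rw [show k + 2 - 1 = k + 1 from rfl, min_self, Nat.add_sub_cancel' hle]
    simp
  -- integrability of T 0
  have hTae : (fun ω => ((τ 2 ω : ℝ) - (τ 1 ω : ℝ))) =ᵐ[P] T 0 := by
    filter_upwards [hreg.mono] with ω hm
    exact (hTval ω hm 0).symm
  have hTint : Integrable (T 0) P := hint.congr hTae
  have hK : 0 ≤ K := by
    obtain ⟨ω, hω⟩ := hbdd.exists
    exact (Real.sqrt_nonneg _).trans (hω 0)
  -- integrability of Z i 0
  have hZae : ∀ i : Fin d,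
      Z i 0 =ᵐ[P] fun ω => X (τ 2 ω) ω i - X (τ 1 ω) ω i := by
    intro i
    filter_upwards [hreg.mono] with ω hm
    exact hZval ω hm i 0
  have hZbound : ∀ᵐ ω ∂P, ∀ i : Fin d,
      |X (τ 2 ω) ω i - X (τ 1 ω) ω i| ≤ K * ((τ 2 ω : ℝ) - (τ 1 ω : ℝ)) := by
    filter_upwards [hreg.mono, hbdd] with ω hm hb i
    have hle : τ 1 ω ≤ τ 2 ω := (hm 1).le
    have h1 := jump_bound X ω K hb i (τ 2 ω - τ 1 ω) (τ 1 ω)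
    rw [Nat.add_sub_cancel' hle, Nat.cast_sub hle] at h1
    exact h1
  have hZint : ∀ i : Fin d, Integrable (Z i 0) P := by
    intro i
    refine Integrable.mono' (hint.const_mul K)
      ((measurable_evalEnd i).comp (hblock 2)).aestronglyMeasurable ?_
    filter_upwards [hreg.mono, hZbound] with ω hm hbnd
    rw [Real.norm_eq_abs, hZval ω hm i 0]
    simpa using hbnd i
  -- iid structure
  have hTpair : Pairwise (Function.onFun (IndepFun · · P) T) := by
    intro a b hab
    exact (hreg.indep.indepFun (show a + 1 ≠ b + 1 by omega)).comp
      measurable_lenR measurable_lenR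
  have hTident : ∀ k, IdentDistrib (T k) (T 0) P P := fun k =>
    ((hreg.ident (k + 2) (by omega)).comp measurable_lenR)
  have hZpair : ∀ i : Fin d, Pairwise (Function.onFun (IndepFun · · P) (Z i)) := by
    intro i a b hab
    exact (hreg.indep.indepFun (show a + 1 ≠ b + 1 by omega)).comp
      (measurable_evalEnd i) (measurable_evalEnd i)
  have hZident : ∀ (i : Fin d) k, IdentDistrib (Z i k) (Z i 0) P P := fun i k =>
    ((hreg.ident (k + 2) (by omega)).comp (measurable_evalEnd i))
  -- strong laws
  have hTmean : P[T 0] = E := (integral_congr_ae hTae).symm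
  have hTlln : ∀ᵐ ω ∂P,
      Filter.Tendsto (fun n : ℕ => (∑ k ∈ range n, T k ω) / n) Filter.atTop (nhds E) := by
    have := strong_law_ae_real T hTint hTpair hTident
    rwa [hTmean] at this
  have hZlln : ∀ᵐ ω ∂P, ∀ i : Fin d,
      Filter.Tendsto (fun n : ℕ => (∑ k ∈ range n, Z i k ω) / n) Filter.atTop (nhds (L i)) := by
    rw [MeasureTheory.ae_all_iff]
    intro i
    have h := strong_law_ae_real (Z i) (hZint i) (hZpair i) (hZident i)
    have hmean : P[Z i 0] = L i := integral_congr_ae (hZae i)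
    rwa [hmean] at h
  -- the key identity
  have key : ∀ i : Fin d, v i * E = L i := by
    have hconc : ∀ᵐ ω ∂P, ∀ i : Fin d, v i * E = L i := by
      filter_upwards [hreg.mono, hlln, hTlln, hZlln] with ω hm hl hT hZ
      intro i
      have sm : StrictMono (fun k => τ k ω) := strictMono_nat_of_lt_succ hm
      have hge : ∀ n, n ≤ τ n ω := fun n => sm.le_apply
      have τpos : ∀ n : ℕ, 0 < τ (n + 1) ω := fun n =>
        lt_of_lt_of_le (Nat.succ_pos n) (hge (n + 1))
      have hτtop : Filter.Tendsto (fun n => τ (n + 1) ω) Filter.atTop Filter.atTop :=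
        Filter.tendsto_atTop_mono (fun n => (Nat.le_succ n).trans (hge (n + 1)))
          Filter.tendsto_id
      -- limit of X(τ(n+1))/τ(n+1)
      have hv : Filter.Tendsto (fun n : ℕ => ((τ (n + 1) ω : ℝ))⁻¹ • X (τ (n + 1) ω) ω)
          Filter.atTop (nhds v) := hl.comp hτtop
      have hvi : Filter.Tendsto (fun n : ℕ => ((τ (n + 1) ω : ℝ))⁻¹ * X (τ (n + 1) ω) ω i)
          Filter.atTop (nhds (v i)) := by
        have := tendsto_pi_nhds.mp hv i
        simpa only [Pi.smul_apply, smul_eq_mul] using this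
      -- limit of τ(n+1)/n
      have hsumT : ∀ n, ∑ k ∈ range n, T k ω = (τ (n + 1) ω : ℝ) - (τ 1 ω : ℝ) := by
        intro n
        induction n with
        | zero => simp
        | succ n ihn =>
          rw [Finset.sum_range_succ, ihn, hTval ω hm n,
            show n + 1 + 1 = n + 2 from rfl]
          ring
      have h0 : Filter.Tendsto (fun n : ℕ => (τ 1 ω : ℝ) / n) Filter.atTop (nhds 0) :=
        tendsto_const_div_atTop_nhds_zero_nat _
      have hτlim : Filter.Tendsto (fun n : ℕ => (τ (n + 1) ω : ℝ) / n)
          Filter.atTop (nhds E) := by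
        have h1 := hT.add h0
        rw [add_zero] at h1
        refine h1.congr (fun n => ?_)
        rw [hsumT n, ← add_div, sub_add_cancel]
      -- limit of X(τ(n+1)) i / n
      have hsumZ : ∀ n, ∑ k ∈ range n, Z i k ω
          = X (τ (n + 1) ω) ω i - X (τ 1 ω) ω i := by
        intro n
        induction n with
        | zero => simp
        | succ n ihn =>
          rw [Finset.sum_range_succ, ihn, hZval ω hm i n]
          rw [show n + 1 + 1 = n + 2 from rfl]
          ring
      have h0' : Filter.Tendsto (fun n : ℕ => X (τ 1 ω) ω i / n) Filter.atTop (nhds 0) :=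
        tendsto_const_div_atTop_nhds_zero_nat _
      have hXlim : Filter.Tendsto (fun n : ℕ => X (τ (n + 1) ω) ω i / n)
          Filter.atTop (nhds (L i)) := by
        have h1 := (hZ i).add h0'
        rw [add_zero] at h1
        refine h1.congr (fun n => ?_)
        rw [hsumZ n, ← add_div, sub_add_cancel]
      -- product
      have hprod : Filter.Tendsto
          (fun n : ℕ => (((τ (n + 1) ω : ℝ))⁻¹ * X (τ (n + 1) ω) ω i)
            * ((τ (n + 1) ω : ℝ) / n)) Filter.atTop (nhds (v i * E)) := hvi.mul hτlim
      have hXlim2 : Filter.Tendsto (fun n : ℕ => X (τ (n + 1) ω) ω i / n)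
          Filter.atTop (nhds (v i * E)) := by
        refine hprod.congr (fun n => ?_)
        have hne : (τ (n + 1) ω : ℝ) ≠ 0 := Nat.cast_ne_zero.2 (τpos n).ne'
        field_simp
      exact tendsto_nhds_unique hXlim2 hXlim
    obtain ⟨ω, hω⟩ := hconc.exists
    exact hω
  -- E ≥ 1 hence nonzero
  have hE1 : (1 : ℝ) ≤ E := by
    have h1 : (1 : ℝ) = ∫ _ω, (1 : ℝ) ∂P := by simp
    rw [h1]
    refine integral_mono_ae (integrable_const 1) hint ?_
    filter_upwards [hreg.mono] with ω hm
    have h2 : τ 1 ω + 1 ≤ τ 2 ω := hm 1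
    have h3 : (τ 1 ω : ℝ) + 1 ≤ (τ 2 ω : ℝ) := by exact_mod_cast h2
    linarith
  have hEne : E ≠ 0 := by linarith
  -- integrability of the vector function
  have hvecint : Integrable (fun ω => X (τ 2 ω) ω - X (τ 1 ω) ω) P := by
    refine Integrable.mono' (hint.const_mul K) ?_ ?_
    · exact ((measurable_comp_rand X hreg.measX (hreg.measτ 2)).sub
        (measurable_comp_rand X hreg.measX (hreg.measτ 1))).aestronglyMeasurable
    · filter_upwards [hreg.mono, hZbound] with ω hm hbnd
      have hτ : (0 : ℝ) ≤ (τ 2 ω : ℝ) - (τ 1 ω : ℝ) := by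
        have := (hm 1).le
        have : (τ 1 ω : ℝ) ≤ (τ 2 ω : ℝ) := by exact_mod_cast this
        linarith
      refine (pi_norm_le_iff_of_nonneg (by positivity)).2 (fun i => ?_)
      simpa [Real.norm_eq_abs] using hbnd i
  -- conclude
  funext i
  have hproj := (ContinuousLinearMap.proj (R := ℝ) (φ := fun _ : Fin d => ℝ) i).integral_comp_comm
    hvecint
  simp only [ContinuousLinearMap.proj_apply, Pi.sub_apply] at hproj
  have h4 : (∫ ω, (X (τ 2 ω) ω - X (τ 1 ω) ω) ∂P) i = L i := by
    rw [← hproj]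
  have h5 : v i * E = L i := key i
  rw [Pi.smul_apply, smul_eq_mul, h4, ← h5]
  field_simp
end
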